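/- Let A be a 2×2 complex matrix with singular value decomposition A = U diag(a,b) V, where 1 ≥ a ≥ b > 0 and U, V unitary. Then B = V† diag(b/a, 1) U† has operator norm at most 1 (so I − B†B ≥ 0, making B a valid Kraus operator of a measurement), and BA = b·I. Moreover b is the largest constant c such that there exists a contraction B' with B'A = c·I. -/

import Mathlib

open scoped ComplexConjugate ComplexOrder
open Finset Matrix

noncomputable section

/-- Index set for three qubits: (clone 1, clone 2, ancilla). -/
abbrev I3 := Fin 2 × Fin 2 × Fin 2

/-- Image of |0⟩|00⟩ under the universal 1→2 cloner:
    √(2/3)|00⟩|1⟩ − (1/√6)(|01⟩+|10⟩)|0⟩. -/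
def out0 : I3 → ℂ := fun p =>
  if p = (0, 0, 1) then ((Real.sqrt (2/3) : ℝ) : ℂ)
  else if p = (0, 1, 0) then -(((1 / Real.sqrt 6 : ℝ)) : ℂ)
  else if p = (1, 0, 0) then -(((1 / Real.sqrt 6 : ℝ)) : ℂ)
  else 0

/-- Image of |1⟩|00⟩ under the universal 1→2 cloner:
    −√(2/3)|11⟩|0⟩ + (1/√6)(|10⟩+|01⟩)|1⟩. -/
def out1 : I3 → ℂ := fun p =>
  if p = (1, 1, 0) then -((Real.sqrt (2/3) : ℝ) : ℂ)
  else if p = (1, 0, 1) then (((1 / Real.sqrt 6 : ℝ)) : ℂ)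
  else if p = (0, 1, 1) then (((1 / Real.sqrt 6 : ℝ)) : ℂ)
  else 0

/-- Output of the cloner on input α|0⟩+β|1⟩. -/
def cloneOut (α β : ℂ) : I3 → ℂ := fun p => α * out0 p + β * out1 p

/-- Output density matrix U(|φ⟩⟨φ| ⊗ |00⟩⟨00|)U†. -/
def rhoOut (α β : ℂ) : Matrix I3 I3 ℂ :=
  Matrix.of fun p q => cloneOut α β p * conj (cloneOut α β q)

/-- Reduced state of the first clone. -/
def rhoC (α β : ℂ) : Matrix (Fin 2) (Fin 2) ℂ :=
  Matrix.of fun i j => ∑ b : Fin 2, ∑ c : Fin 2, rhoOut α β (i, b, c) (j, b, c)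

/-- Reduced state of the ancilla. -/
def rhoA (α β : ℂ) : Matrix (Fin 2) (Fin 2) ℂ :=
  Matrix.of fun i j => ∑ a : Fin 2, ∑ b : Fin 2, rhoOut α β (a, b, i) (a, b, j)

/-- Reduced state of the two clones. -/
def rhoCC (α β : ℂ) : Matrix (Fin 2 × Fin 2) (Fin 2 × Fin 2) ℂ :=
  Matrix.of fun p q => ∑ c : Fin 2, rhoOut α β (p.1, p.2, c) (q.1, q.2, c)

def σx : Matrix (Fin 2) (Fin 2) ℂ := !![0, 1; 1, 0]
def σy : Matrix (Fin 2) (Fin 2) ℂ := !![0, -Complex.I; Complex.I, 0]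
def σz : Matrix (Fin 2) (Fin 2) ℂ := !![1, 0; 0, -1]

/-- s·σ for a real 3-vector s. -/
def pauliDot (s : Fin 3 → ℝ) : Matrix (Fin 2) (Fin 2) ℂ :=
  ((s 0 : ℝ) : ℂ) • σx + ((s 1 : ℝ) : ℂ) • σy + ((s 2 : ℝ) : ℂ) • σz

/-- (1/2)(I + s·σ), the state with Bloch vector s. -/
def blochMat (s : Fin 3 → ℝ) : Matrix (Fin 2) (Fin 2) ℂ :=
  (1/2 : ℂ) • (1 + pauliDot s)

def φvec (α β : ℂ) : Fin 2 → ℂ := ![α, β]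

/-- Outer product |v⟩⟨v| on a qubit. -/
def outer (v : Fin 2 → ℂ) : Matrix (Fin 2) (Fin 2) ℂ :=
  Matrix.of fun i j => v i * conj (v j)

/-- The images U(|i⟩|00⟩) of the two input basis states. -/
def Uout : Fin 2 → I3 → ℂ := ![out0, out1]

/-- Effective operator on the input qubit corresponding to an operator F on the output:
    E i j = ⟨U(|i⟩|00⟩)| F |U(|j⟩|00⟩)⟩ = (⟨00|_{ba} U† F U |00⟩_{ba}) i j. -/
def effOf (F : Matrix I3 I3 ℂ) : Matrix (Fin 2) (Fin 2) ℂ :=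
  Matrix.of fun i j => ∑ p : I3, ∑ q : I3, conj (Uout i p) * F p q * Uout j q

/-- F ⊗ I ⊗ I: a measurement on the first clone only. -/
def extC (F : Matrix (Fin 2) (Fin 2) ℂ) : Matrix I3 I3 ℂ :=
  Matrix.of fun p q => F p.1 q.1 * (if p.2 = q.2 then 1 else 0)

/-- I ⊗ I ⊗ F: a measurement on the ancilla only. -/
def extA (F : Matrix (Fin 2) (Fin 2) ℂ) : Matrix I3 I3 ℂ :=
  Matrix.of fun p q => (if (p.1, p.2.1) = (q.1, q.2.1) then 1 else 0) * F p.2.2 q.2.2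

/-- F ⊗ I_ancilla: a measurement on the two clones. -/
def extCC (F : Matrix (Fin 2 × Fin 2) (Fin 2 × Fin 2) ℂ) : Matrix I3 I3 ℂ :=
  Matrix.of fun p q => F (p.1, p.2.1) (q.1, q.2.1) * (if p.2.2 = q.2.2 then 1 else 0)

/-- Bell basis on two qubits, in the order φ⁺, ψ⁺, φ⁻, ψ⁻. -/
def bell : Fin 4 → (Fin 2 × Fin 2) → ℂ :=
  ![fun p => if p = (0,0) then ((1 / Real.sqrt 2 : ℝ) : ℂ)
             else if p = (1,1) then ((1 / Real.sqrt 2 : ℝ) : ℂ) else 0,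
    fun p => if p = (0,1) then ((1 / Real.sqrt 2 : ℝ) : ℂ)
             else if p = (1,0) then ((1 / Real.sqrt 2 : ℝ) : ℂ) else 0,
    fun p => if p = (0,0) then ((1 / Real.sqrt 2 : ℝ) : ℂ)
             else if p = (1,1) then -((1 / Real.sqrt 2 : ℝ) : ℂ) else 0,
    fun p => if p = (0,1) then ((1 / Real.sqrt 2 : ℝ) : ℂ)
             else if p = (1,0) then -((1 / Real.sqrt 2 : ℝ) : ℂ) else 0]

/-- Kronecker product of two single-qubit matrices. -/
def kron2 (A B : Matrix (Fin 2) (Fin 2) ℂ) : Matrix (Fin 2 × Fin 2) (Fin 2 × Fin 2) ℂ :=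
  Matrix.of fun p q => A p.1 q.1 * B p.2 q.2

/-- Projector onto the symmetric subspace of two qubits: I − |ψ⁻⟩⟨ψ⁻|. -/
def symProj : Matrix (Fin 2 × Fin 2) (Fin 2 × Fin 2) ℂ :=
  1 - Matrix.of fun p q => bell 3 p * conj (bell 3 q)

/-- Projector onto the antisymmetric subspace: |ψ⁻⟩⟨ψ⁻|. -/
def antiProj : Matrix (Fin 2 × Fin 2) (Fin 2 × Fin 2) ℂ :=
  Matrix.of fun p q => bell 3 p * conj (bell 3 q)

/-- Computational basis vector |abc⟩ of three qubits. -/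
def e3 (a b c : Fin 2) : I3 → ℂ := fun p => if p = (a, b, c) then 1 else 0

/-- ∑ₚ conj(v p) w p, the inner product on three qubits. -/
def inner3 (v w : I3 → ℂ) : ℂ := ∑ p : I3, conj (v p) * w p

/-- for A = U diag(a,b) V with 1 ≥ a ≥ b > 0 and U, V unitary, the matrix
B = V† diag(b/a, 1) U† is a contraction (I − B†B ≥ 0) with BA = b·I, and b is the
largest constant c admitting a contraction B' with B'A = c·I. -/
theorem optimal_restoration_filter (A U V : Matrix (Fin 2) (Fin 2) ℂ) (a b : ℝ)
    (hU : U ∈ Matrix.unitaryGroup (Fin 2) ℂ) (hV : V ∈ Matrix.unitaryGroup (Fin 2) ℂ)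
    (ha1 : a ≤ 1) (hba : b ≤ a) (hb : 0 < b)
    (hA : A = U * Matrix.diagonal ![(a : ℂ), (b : ℂ)] * V) :
    (1 - (Vᴴ * Matrix.diagonal ![((b/a : ℝ) : ℂ), 1] * Uᴴ)ᴴ *
         (Vᴴ * Matrix.diagonal ![((b/a : ℝ) : ℂ), 1] * Uᴴ)).PosSemidef ∧
    (Vᴴ * Matrix.diagonal ![((b/a : ℝ) : ℂ), 1] * Uᴴ) * A = (b : ℂ) • 1 ∧
    ∀ (c : ℝ) (B' : Matrix (Fin 2) (Fin 2) ℂ),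
      (1 - B'ᴴ * B').PosSemidef → B' * A = (c : ℂ) • 1 → c ≤ b := by
  have ha : (0:ℝ) < a := lt_of_lt_of_le hb hba
  have haC : (a:ℂ) ≠ 0 := by exact_mod_cast ha.ne'
  have hUU : Uᴴ * U = 1 := hU.1
  have hUU' : U * Uᴴ = 1 := hU.2
  have hVV : Vᴴ * V = 1 := hV.1
  have hVV' : V * Vᴴ = 1 := hV.2
  set D : Matrix (Fin 2) (Fin 2) ℂ := Matrix.diagonal ![((b/a : ℝ) : ℂ), 1] with hD
  set D' : Matrix (Fin 2) (Fin 2) ℂ := Matrix.diagonal ![(a : ℂ), (b : ℂ)] with hD'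
  have hDH : Dᴴ = D := by
    ext i j
    fin_cases i <;> fin_cases j <;>
      simp [hD, Matrix.conjTranspose_apply, Matrix.diagonal]
  refine ⟨?_, ?_, ?_⟩
  · have h1 : (Vᴴ * D * Uᴴ)ᴴ * (Vᴴ * D * Uᴴ) = U * (D * D) * Uᴴ := by
      rw [conjTranspose_mul, conjTranspose_mul, hDH, conjTranspose_conjTranspose,
        conjTranspose_conjTranspose]
      calc U * (D * V) * (Vᴴ * D * Uᴴ) = U * D * (V * Vᴴ) * (D * Uᴴ) := by
            simp only [Matrix.mul_assoc]
        _ = U * (D * D) * Uᴴ := by rw [hVV']; simp only [Matrix.mul_one, Matrix.mul_assoc]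
    have h2 : (1 : Matrix (Fin 2) (Fin 2) ℂ) - (Vᴴ * D * Uᴴ)ᴴ * (Vᴴ * D * Uᴴ)
        = U * (1 - D * D) * Uᴴ := by
      rw [h1, Matrix.mul_sub, Matrix.sub_mul, Matrix.mul_one, hUU']
    rw [h2]
    refine PosSemidef.mul_mul_conjTranspose_same ?_ U
    have h3 : (1 : Matrix (Fin 2) (Fin 2) ℂ) - D * D
        = Matrix.diagonal ![1 - ((b/a:ℝ):ℂ) * ((b/a:ℝ):ℂ), 0] := by
      ext i j
      fin_cases i <;> fin_cases j <;>
        simp [hD, Matrix.one_apply, Matrix.diagonal, Matrix.mul_apply, Fin.sum_univ_two]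
    rw [h3]
    refine posSemidef_diagonal_iff.mpr fun i => ?_
    fin_cases i
    · have hba1 : b / a ≤ 1 := (div_le_one ha).mpr hba
      have hba0 : (0:ℝ) ≤ b / a := le_of_lt (div_pos hb ha)
      have h4 : ((1 - (b/a)*(b/a) : ℝ) : ℂ) = 1 - ((b/a:ℝ):ℂ) * ((b/a:ℝ):ℂ) := by
        push_cast; ring
      show (0:ℂ) ≤ 1 - ((b/a:ℝ):ℂ) * ((b/a:ℝ):ℂ)
      rw [← h4, Complex.zero_le_real]
      nlinarith
    · show (0:ℂ) ≤ 0
      exact le_refl 0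
  · rw [hA]
    calc Vᴴ * D * Uᴴ * (U * D' * V) = Vᴴ * D * (Uᴴ * U) * (D' * V) := by
          simp only [Matrix.mul_assoc]
      _ = Vᴴ * (D * D') * V := by rw [hUU]; simp only [Matrix.mul_one, Matrix.mul_assoc]
      _ = Vᴴ * ((b:ℂ) • 1) * V := by
          have hDD' : D * D' = (b:ℂ) • 1 := by
            ext i j
            fin_cases i <;> fin_cases j <;>
              simp [hD, hD', Matrix.one_apply, Matrix.diagonal, Matrix.mul_apply,
                Fin.sum_univ_two]
            field_simp
          rw [hDD']
      _ = (b:ℂ) • 1 := by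
          rw [Matrix.mul_smul, Matrix.smul_mul, Matrix.mul_one, hVV]
  · intro c B' hP hE
    obtain ⟨e, he⟩ : ∃ e : Fin 2 → ℂ, e = Pi.single 1 1 := ⟨_, rfl⟩
    obtain ⟨y, hy⟩ : ∃ y, y = U *ᵥ e := ⟨_, rfl⟩
    obtain ⟨z, hz⟩ : ∃ z, z = Vᴴ *ᵥ e := ⟨_, rfl⟩
    obtain ⟨w, hw⟩ : ∃ w, w = B' *ᵥ y := ⟨_, rfl⟩
    have hee : star e ⬝ᵥ e = 1 := by simp [he]
    have hyy : star y ⬝ᵥ y = 1 := by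
      rw [hy, star_mulVec, dotProduct_mulVec, vecMul_vecMul, hUU, vecMul_one, hee]
    have hzz : star z ⬝ᵥ z = 1 := by
      rw [hz, star_mulVec, dotProduct_mulVec, vecMul_vecMul, conjTranspose_conjTranspose,
        hVV', vecMul_one, hee]
    have hAz : A *ᵥ z = (b:ℂ) • y := by
      calc A *ᵥ z = (U * D' * (V * Vᴴ)) *ᵥ e := by
            rw [hA, hz, mulVec_mulVec, Matrix.mul_assoc]
        _ = U *ᵥ (D' *ᵥ e) := by rw [hVV', Matrix.mul_one, ← mulVec_mulVec]
        _ = (b:ℂ) • y := by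
            rw [he, hD', diagonal_mulVec_single]
            have hsingle : Pi.single (1 : Fin 2) ((![(a:ℂ), (b:ℂ)] 1) * 1)
                = (b:ℂ) • (Pi.single 1 1 : Fin 2 → ℂ) := by
              funext i
              fin_cases i <;> simp
            rw [hsingle, mulVec_smul, hy, he]
    have hcz : (c:ℂ) • z = (b:ℂ) • w := by
      have h5 := congrArg (fun M => M *ᵥ z) hE
      simp only [Matrix.smul_mulVec, Matrix.one_mulVec, ← Matrix.mulVec_mulVec] at h5
      rw [hAz, mulVec_smul, ← hw] at h5
      exact h5.symm
    have hS : star w ⬝ᵥ w ≤ 1 := by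
      have hS' : star y ⬝ᵥ (B'ᴴ *ᵥ (B' *ᵥ y)) = star w ⬝ᵥ w := by
        rw [dotProduct_mulVec, ← star_mulVec, hw]
      have h0 := hP.dotProduct_mulVec_nonneg y
      rw [Matrix.sub_mulVec, Matrix.one_mulVec, dotProduct_sub, ← mulVec_mulVec,
        hS', hyy] at h0
      exact sub_nonneg.mp h0
    have key : ((c:ℂ))^2 = ((b:ℂ))^2 * (star w ⬝ᵥ w) := by
      have h6 : star ((c:ℂ) • z) ⬝ᵥ ((c:ℂ) • z) = star ((b:ℂ) • w) ⬝ᵥ ((b:ℂ) • w) := by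
        rw [hcz]
      simp only [star_smul, smul_dotProduct, dotProduct_smul, smul_eq_mul,
        RCLike.star_def, Complex.conj_ofReal, hzz, mul_one] at h6
      rw [sq, sq]
      rw [h6]; ring
    have him : (star w ⬝ᵥ w).im = 0 := by
      have := (Complex.le_def.mp hS).2
      simpa using this
    have hSre : (star w ⬝ᵥ w).re ≤ 1 := by
      have := (Complex.le_def.mp hS).1
      simpa using this
    have hSeq : (star w ⬝ᵥ w) = (((star w ⬝ᵥ w).re : ℝ) : ℂ) := by
      apply Complex.ext
      · simp
      · rw [Complex.ofReal_im, him]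
    rw [hSeq] at key
    have key' : c^2 = b^2 * (star w ⬝ᵥ w).re := by
      have : ((c^2 : ℝ) : ℂ) = ((b^2 * (star w ⬝ᵥ w).re : ℝ) : ℂ) := by
        push_cast
        linear_combination key
      exact_mod_cast this
    nlinarith [sq_nonneg (b - c), sq_nonneg (b + c)]
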